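/- Under RSI with constant μ > 0, gradient descent with constant step size t = μ/L² satisfies dist²(x_{k+1}, S) ≤ (1 − μ²/L²)·dist²(x_k, S) for each iteration. -/

import Mathlib

open Metric Set Filter

local notation "⟪" x ", " y "⟫_ℝ" => @inner ℝ _ _ x y

noncomputable section

abbrev En (n : ℕ) := EuclideanSpace ℝ (Fin n)

def frechetSubdiff {n : ℕ} (f : En n → ℝ) (x : En n) : Set (En n) :=
  {s | ∀ ε > 0, ∀ᶠ y in nhds x, f x + ⟪s, y - x⟫_ℝ - ε * ‖y - x‖ ≤ f y}

def convexSubdiff {n : ℕ} (f : En n → ℝ) (x : En n) : Set (En n) :=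
  {g | ∀ y, f x + ⟪g, y - x⟫_ℝ ≤ f y}

/-- Under RSI with constant μ > 0, gradient descent with constant step
size t = μ/L² satisfies dist²(x_{k+1},S) ≤ (1 − μ²/L²)·dist²(x_k,S). -/
theorem gd_linear_iterates_under_rsi {n : ℕ} (f : En n → ℝ) (f' : En n → En n)
    (L μ : ℝ) (hL : 0 < L) (hμ : 0 < μ) (hμL : μ ≤ L)
    (hgrad : ∀ x, HasGradientAt f (f' x) x)
    (hlip : ∀ x y, ‖f' x - f' y‖ ≤ L * ‖x - y‖)
    (S : Set (En n)) (hS : S = {x | ∀ y, f x ≤ f y}) (hne : S.Nonempty)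
    (p : En n → En n) (hpS : ∀ x, p x ∈ S) (hpd : ∀ x, ‖x - p x‖ = infDist x S)
    (hRSI : ∀ x, μ * (infDist x S) ^ 2 ≤ ⟪f' x, x - p x⟫_ℝ)
    (x : ℕ → En n) (hiter : ∀ k, x (k + 1) = x k - (μ / L ^ 2) • f' (x k)) :
    ∀ k, (infDist (x (k + 1)) S) ^ 2 ≤ (1 - μ ^ 2 / L ^ 2) * (infDist (x k) S) ^ 2 := by
  intro k
  set t : ℝ := μ / L ^ 2 with ht
  set u : En n := x k - p (x k) with hu
  set g : En n := f' (x k) with hg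
  set d : ℝ := infDist (x k) S with hd
  have hdnn : 0 ≤ d := infDist_nonneg
  have hund : ‖u‖ = d := hpd (x k)
  -- gradient vanishes at the minimizer p (x k)
  have hpmin : ∀ y, f (p (x k)) ≤ f y := by
    have := hpS (x k); rw [hS] at this; exact this
  have hloc : IsLocalMin f (p (x k)) := Filter.Eventually.of_forall hpmin
  have hgz : f' (p (x k)) = 0 := by
    have h0 := hloc.hasFDerivAt_eq_zero (hgrad (p (x k))).hasFDerivAt
    have : (InnerProductSpace.toDual ℝ (En n)) (f' (p (x k))) = 0 := h0
    simpa using congrArg (InnerProductSpace.toDual ℝ (En n)).symm this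
  -- gradient norm bound
  have hGn : ‖g‖ ≤ L * d := by
    have := hlip (x k) (p (x k))
    rw [hgz, sub_zero] at this
    exact this.trans_eq (congrArg (L * ·) hund)
  have hGnn : 0 ≤ ‖g‖ := norm_nonneg _
  -- RSI
  have hin : μ * d ^ 2 ≤ ⟪g, u⟫_ℝ := hRSI (x k)
  -- expansion
  have hexp : ‖x (k + 1) - p (x k)‖ ^ 2 = d ^ 2 - 2 * t * ⟪g, u⟫_ℝ + t ^ 2 * ‖g‖ ^ 2 := by
    have : x (k + 1) - p (x k) = u - t • g := by
      rw [hiter k, hu, hg]; module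
    rw [this, norm_sub_sq_real, real_inner_smul_right, norm_smul, hund,
      real_inner_comm]
    have : |t| = t := abs_of_pos (by positivity)
    rw [Real.norm_eq_abs, this]
    ring
  have hle : infDist (x (k + 1)) S ≤ ‖x (k + 1) - p (x k)‖ := by
    simpa [dist_eq_norm] using infDist_le_dist_of_mem (hpS (x k))
  have hsq : (infDist (x (k + 1)) S) ^ 2 ≤ ‖x (k + 1) - p (x k)‖ ^ 2 :=
    pow_le_pow_left₀ infDist_nonneg hle 2
  have hL2 : (0:ℝ) < L ^ 2 := by positivity
  have h1 : t * μ = μ ^ 2 / L ^ 2 := by rw [ht]; field_simp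
  have h2 : t ^ 2 * L ^ 2 = μ ^ 2 / L ^ 2 := by
    rw [ht]; field_simp
  have htpos : 0 < t := by positivity
  have hGsq : ‖g‖ ^ 2 ≤ L ^ 2 * d ^ 2 := by
    have := pow_le_pow_left₀ hGnn hGn 2
    calc ‖g‖ ^ 2 ≤ (L * d) ^ 2 := this
      _ = L ^ 2 * d ^ 2 := by ring
  calc (infDist (x (k + 1)) S) ^ 2 ≤ d ^ 2 - 2 * t * ⟪g, u⟫_ℝ + t ^ 2 * ‖g‖ ^ 2 := by
        rw [← hexp]; exact hsq
    _ ≤ d ^ 2 - 2 * t * (μ * d ^ 2) + t ^ 2 * (L ^ 2 * d ^ 2) := by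
        have hA : 2 * t * (μ * d ^ 2) ≤ 2 * t * ⟪g, u⟫_ℝ :=
          mul_le_mul_of_nonneg_left hin (by positivity)
        have hB : t ^ 2 * ‖g‖ ^ 2 ≤ t ^ 2 * (L ^ 2 * d ^ 2) :=
          mul_le_mul_of_nonneg_left hGsq (sq_nonneg t)
        linarith
    _ = (1 - μ ^ 2 / L ^ 2) * d ^ 2 := by
        linear_combination (-2 * d ^ 2) * h1 + d ^ 2 * h2
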